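/- A convolutional code is determined by its polynomial part: Let F be a finite field, F((z)) the field of formal Laurent series over F, and let G, G' ∈ F[z]^{k×n} both be right invertible (i.e., each has a polynomial right inverse). Then { uG : u ∈ F((z))^k } = { uG' : u ∈ F((z))^k } if and only if { uG : u ∈ F[z]^k } = { uG' : u ∈ F[z]^k }. -/
import Mathlib


open Polynomial Matrix

/-- The canonical ring embedding of polynomials into formal Laurent series. -/
noncomputable def polyToLaurent (F : Type*) [Field F] :
    Polynomial F →+* LaurentSeries F :=
  (HahnSeries.ofPowerSeries ℤ F).comp Polynomial.coeToPowerSeries.ringHom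

lemma polyToLaurent_injective (F : Type*) [Field F] :
    Function.Injective (polyToLaurent F) :=
  HahnSeries.ofPowerSeries_injective.comp (Polynomial.coe_injective F)

section Aux

variable {F : Type*} [Field F] {k n : ℕ}

/-- Mapping a vecMul through the ring hom. -/
lemma vecMul_map (u : Fin k → Polynomial F) (A : Matrix (Fin k) (Fin n) (Polynomial F)) :
    (polyToLaurent F) ∘ (Matrix.vecMul u A) =
      Matrix.vecMul ((polyToLaurent F) ∘ u) (A.map (polyToLaurent F)) := by
  funext j
  exact RingHom.map_vecMul (polyToLaurent F) A u j

/-- A factorization `G = M * G'` gives inclusion of polynomial codes. -/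
lemma poly_subset_of_factor (G G' : Matrix (Fin k) (Fin n) (Polynomial F))
    (M : Matrix (Fin k) (Fin k) (Polynomial F)) (h : G = M * G') :
    {v : Fin n → Polynomial F | ∃ u : Fin k → Polynomial F, v = Matrix.vecMul u G} ⊆
      {v : Fin n → Polynomial F | ∃ u : Fin k → Polynomial F, v = Matrix.vecMul u G'} := by
  rintro v ⟨u, rfl⟩
  exact ⟨Matrix.vecMul u M, by rw [h, Matrix.vecMul_vecMul]⟩

/-- A factorization `G = M * G'` gives inclusion of Laurent codes. -/
lemma laurent_subset_of_factor (G G' : Matrix (Fin k) (Fin n) (Polynomial F))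
    (M : Matrix (Fin k) (Fin k) (Polynomial F)) (h : G = M * G') :
    {v : Fin n → LaurentSeries F |
        ∃ u : Fin k → LaurentSeries F, v = Matrix.vecMul u (G.map (polyToLaurent F))} ⊆
      {v : Fin n → LaurentSeries F |
        ∃ u : Fin k → LaurentSeries F, v = Matrix.vecMul u (G'.map (polyToLaurent F))} := by
  rintro v ⟨u, rfl⟩
  refine ⟨Matrix.vecMul u (M.map (polyToLaurent F)), ?_⟩
  rw [h, Matrix.map_mul, Matrix.vecMul_vecMul]

/-- From inclusion of polynomial codes and a right inverse for `G'`, get a factorization. -/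
lemma factor_of_poly_subset (G G' : Matrix (Fin k) (Fin n) (Polynomial F))
    (H' : Matrix (Fin n) (Fin k) (Polynomial F)) (hH' : G' * H' = 1)
    (hsub : {v : Fin n → Polynomial F | ∃ u : Fin k → Polynomial F, v = Matrix.vecMul u G} ⊆
      {v : Fin n → Polynomial F | ∃ u : Fin k → Polynomial F, v = Matrix.vecMul u G'}) :
    G = (G * H') * G' := by
  have key : ∀ i : Fin k, ∃ u : Fin k → Polynomial F, G i = Matrix.vecMul u G' := by
    intro i
    exact hsub ⟨Pi.single i 1, (Matrix.single_one_vecMul i G).symm⟩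
  choose U hU using key
  have hGU : G = Matrix.of U * G' := by
    refine Matrix.ext fun i j => ?_
    have := congrFun (hU i) j
    simpa [Matrix.mul_apply, Matrix.vecMul, dotProduct] using this
  have : Matrix.of U = G * H' := by
    calc Matrix.of U = Matrix.of U * (G' * H') := by rw [hH', Matrix.mul_one]
    _ = (Matrix.of U * G') * H' := by rw [Matrix.mul_assoc]
    _ = G * H' := by rw [← hGU]
  rw [← this, ← hGU]

/-- From inclusion of Laurent codes and a right inverse for `G'`, get a factorization. -/
lemma factor_of_laurent_subset (G G' : Matrix (Fin k) (Fin n) (Polynomial F))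
    (H' : Matrix (Fin n) (Fin k) (Polynomial F)) (hH' : G' * H' = 1)
    (hsub : {v : Fin n → LaurentSeries F |
        ∃ u : Fin k → LaurentSeries F, v = Matrix.vecMul u (G.map (polyToLaurent F))} ⊆
      {v : Fin n → LaurentSeries F |
        ∃ u : Fin k → LaurentSeries F, v = Matrix.vecMul u (G'.map (polyToLaurent F))}) :
    G = (G * H') * G' := by
  set f := polyToLaurent F
  have key : ∀ i : Fin k, ∃ u : Fin k → LaurentSeries F,
      (G.map f) i = Matrix.vecMul u (G'.map f) := by
    intro i
    exact hsub ⟨Pi.single i 1, (Matrix.single_one_vecMul i (G.map f)).symm⟩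
  choose U hU using key
  have hGU : G.map f = Matrix.of U * G'.map f := by
    ext i j : 2
    have := congrFun (hU i) j
    simpa [Matrix.mul_apply, Matrix.vecMul, dotProduct] using this
  have hU' : Matrix.of U = G.map f * H'.map f := by
    calc Matrix.of U = Matrix.of U * ((G' * H').map f) := by
          rw [hH']
          simp [Matrix.map_one]
    _ = Matrix.of U * (G'.map f * H'.map f) := by rw [Matrix.map_mul]
    _ = (Matrix.of U * G'.map f) * H'.map f := by rw [Matrix.mul_assoc]
    _ = G.map f * H'.map f := by rw [← hGU]
  have hmap : G.map f = ((G * H') * G').map f := by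
    rw [Matrix.map_mul, Matrix.map_mul, ← hU', ← hGU]
  refine Matrix.ext fun i j => ?_
  exact polyToLaurent_injective F (by simpa [Matrix.map_apply] using congrFun (congrFun hmap i) j)

end Aux

/-- **A convolutional code is uniquely determined by its polynomial part.**
Let `F` be a finite field, `F((z))` the field of formal Laurent series over `F`, and
let `G, G' ∈ F[z]^{k×n}` both have polynomial right inverses.  Then
`{ uG : u ∈ F((z))^k } = { uG' : u ∈ F((z))^k }` if and only if
`{ uG : u ∈ F[z]^k } = { uG' : u ∈ F[z]^k }`. -/
theorem code_determined_by_polynomial_part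
    {F : Type*} [Field F] [Fintype F] {k n : ℕ}
    (G G' : Matrix (Fin k) (Fin n) (Polynomial F))
    (hG : ∃ H : Matrix (Fin n) (Fin k) (Polynomial F), G * H = 1)
    (hG' : ∃ H : Matrix (Fin n) (Fin k) (Polynomial F), G' * H = 1) :
    ({v : Fin n → LaurentSeries F |
        ∃ u : Fin k → LaurentSeries F, v = Matrix.vecMul u (G.map (polyToLaurent F))} =
      {v : Fin n → LaurentSeries F |
        ∃ u : Fin k → LaurentSeries F, v = Matrix.vecMul u (G'.map (polyToLaurent F))}) ↔
    ({v : Fin n → Polynomial F | ∃ u : Fin k → Polynomial F, v = Matrix.vecMul u G} =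
      {v : Fin n → Polynomial F | ∃ u : Fin k → Polynomial F, v = Matrix.vecMul u G'}) := by
  obtain ⟨H, hH⟩ := hG
  obtain ⟨H', hH'⟩ := hG'
  constructor
  · intro h
    apply Set.Subset.antisymm
    · exact poly_subset_of_factor G G' (G * H')
        (factor_of_laurent_subset G G' H' hH' h.subset)
    · exact poly_subset_of_factor G' G (G' * H)
        (factor_of_laurent_subset G' G H hH h.symm.subset)
  · intro h
    apply Set.Subset.antisymm
    · exact laurent_subset_of_factor G G' (G * H')
        (factor_of_poly_subset G G' H' hH' h.subset)
    · exact laurent_subset_of_factor G' G (G' * H)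
        (factor_of_poly_subset G' G H hH h.symm.subset)
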